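/- For n ≥ 3, let G = K_{n,n} minus a perfect matching with parts {x_1,...,x_n}, {y_1,...,y_n} and edges x_i y_j for i ≠ j. Then W = {x_1, ..., x_{n-1}} is a resolving set of G. -/

import Mathlib

/-- `W` resolves `G`: every vertex is determined by its distance vector to `W`. -/
def Resolves {V : Type*} (G : SimpleGraph V) (W : Set V) : Prop :=
  ∀ u v : V, (∀ w ∈ W, G.dist u w = G.dist v w) → u = v

/-- Metric dimension: minimum cardinality of a (finite) resolving set. -/
noncomputable def metricDim {V : Type*} (G : SimpleGraph V) : ℕ :=
  sInf {k | ∃ W : Set V, W.Finite ∧ W.ncard = k ∧ Resolves G W}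

/-- `K_{n,n}` minus a perfect matching: parts `inl i` (the xᵢ) and `inr j` (the yⱼ),
with `xᵢ ~ yⱼ` iff `i ≠ j`. -/
def matchGraph (n : ℕ) : SimpleGraph (Fin n ⊕ Fin n) where
  Adj u v := match u, v with
    | Sum.inl i, Sum.inr j => i ≠ j
    | Sum.inr j, Sum.inl i => i ≠ j
    | _, _ => False
  symm := ⟨by rintro (i|i) (j|j) h <;> exact h⟩
  loopless := ⟨by rintro (i|i) h <;> exact h⟩

lemma exists_third {n : ℕ} (hn : 3 ≤ n) (i j : Fin n) : ∃ k : Fin n, k ≠ i ∧ k ≠ j := by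
  by_contra h
  push_neg at h
  have hsub : (Finset.univ : Finset (Fin n)) ⊆ {i, j} := by
    intro k _
    simp only [Finset.mem_insert, Finset.mem_singleton]
    by_cases hk : k = i
    · exact Or.inl hk
    · exact Or.inr (h k hk)
  have := Finset.card_le_card hsub
  simp [Finset.card_univ] at this
  have h2 : ({i, j} : Finset (Fin n)).card ≤ 2 :=
    (Finset.card_insert_le _ _).trans (by simp)
  omega

lemma dist_xy {n : ℕ} {i j : Fin n} (h : i ≠ j) :
    (matchGraph n).dist (Sum.inl i) (Sum.inr j) = 1 :=
  SimpleGraph.dist_eq_one_iff_adj.mpr h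

lemma dist_xx {n : ℕ} (hn : 3 ≤ n) {i j : Fin n} (h : i ≠ j) :
    (matchGraph n).dist (Sum.inl i) (Sum.inl j) = 2 := by
  obtain ⟨k, hki, hkj⟩ := exists_third hn i j
  have h1 : (matchGraph n).Adj (Sum.inl i) (Sum.inr k) := Ne.symm hki
  have h2 : (matchGraph n).Adj (Sum.inr k) (Sum.inl j) := Ne.symm hkj
  have hle : (matchGraph n).dist (Sum.inl i) (Sum.inl j) ≤ 2 :=
    SimpleGraph.dist_le (SimpleGraph.Walk.cons h1 (SimpleGraph.Walk.cons h2 SimpleGraph.Walk.nil))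
  have hne0 : (matchGraph n).dist (Sum.inl i) (Sum.inl j) ≠ 0 := by
    intro h0
    rcases SimpleGraph.dist_eq_zero_iff_eq_or_not_reachable.mp h0 with heq | hnr
    · exact h (Sum.inl.inj heq)
    · exact hnr ⟨SimpleGraph.Walk.cons h1 (SimpleGraph.Walk.cons h2 SimpleGraph.Walk.nil)⟩
  have hne1 : (matchGraph n).dist (Sum.inl i) (Sum.inl j) ≠ 1 := by
    intro h1'
    exact SimpleGraph.dist_eq_one_iff_adj.mp h1'
  omega

lemma dist_xy_same {n : ℕ} (hn : 3 ≤ n) (i : Fin n) :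
    (matchGraph n).dist (Sum.inl i) (Sum.inr i) = 3 := by
  obtain ⟨j, hji, _⟩ := exists_third hn i i
  obtain ⟨k, hki, hkj⟩ := exists_third hn i j
  have h1 : (matchGraph n).Adj (Sum.inl i) (Sum.inr j) := Ne.symm hji
  have h2 : (matchGraph n).Adj (Sum.inr j) (Sum.inl k) := hkj
  have h3 : (matchGraph n).Adj (Sum.inl k) (Sum.inr i) := hki
  have hle : (matchGraph n).dist (Sum.inl i) (Sum.inr i) ≤ 3 :=
    SimpleGraph.dist_le (SimpleGraph.Walk.cons h1 (SimpleGraph.Walk.cons h2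
      (SimpleGraph.Walk.cons h3 SimpleGraph.Walk.nil)))
  have hr : (matchGraph n).Reachable (Sum.inl i) (Sum.inr i) :=
    ⟨SimpleGraph.Walk.cons h1 (SimpleGraph.Walk.cons h2
      (SimpleGraph.Walk.cons h3 SimpleGraph.Walk.nil))⟩
  have hne0 : (matchGraph n).dist (Sum.inl i) (Sum.inr i) ≠ 0 := by
    intro h0
    rcases SimpleGraph.dist_eq_zero_iff_eq_or_not_reachable.mp h0 with heq | hnr
    · exact Sum.inl_ne_inr heq
    · exact hnr hr
  have hne1 : (matchGraph n).dist (Sum.inl i) (Sum.inr i) ≠ 1 := by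
    intro h1'
    exact (SimpleGraph.dist_eq_one_iff_adj.mp h1') rfl
  have hne2 : (matchGraph n).dist (Sum.inl i) (Sum.inr i) ≠ 2 := by
    intro h2'
    obtain ⟨q, hq⟩ := hr.exists_walk_length_eq_dist
    rw [h2'] at hq
    match q, hq with
    | SimpleGraph.Walk.cons (v := Sum.inr a) ha (SimpleGraph.Walk.cons hb SimpleGraph.Walk.nil), _ =>
      exact hb
    | SimpleGraph.Walk.cons (v := Sum.inl a) ha _, _ => exact ha
  omega

/-- `W = {x₁, …, x_{n-1}}` (0-indexed: `inl i` for `i < n-1`)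
is a resolving set of `K_{n,n}` minus a perfect matching. -/
theorem stmt2 (n : ℕ) (hn : 3 ≤ n) :
    Resolves (matchGraph n) {u | ∃ i : Fin n, (i : ℕ) < n - 1 ∧ u = Sum.inl i} := by
  intro u v h
  have npos : 0 < n := by omega
  have dxx : ∀ i j : Fin n, (matchGraph n).dist (Sum.inl i) (Sum.inl j)
      = if i = j then 0 else 2 := by
    intro i j
    split
    · next he => rw [he, SimpleGraph.dist_self]
    · next he => exact dist_xx hn he
  have dxy : ∀ i j : Fin n, (matchGraph n).dist (Sum.inr i) (Sum.inl j)
      = if i = j then 3 else 1 := by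
    intro i j
    rw [SimpleGraph.dist_comm]
    split
    · next he => rw [he]; exact dist_xy_same hn j
    · next he => exact dist_xy (fun e => he e.symm)
  have mem : ∀ i : Fin n, (i : ℕ) < n - 1 →
      (Sum.inl i : Fin n ⊕ Fin n) ∈ {u | ∃ i : Fin n, (i : ℕ) < n - 1 ∧ u = Sum.inl i} :=
    fun i hi => ⟨i, hi, rfl⟩
  have key : ∀ i j : Fin n, i ≠ j → (i : ℕ) < n - 1 ∨ (j : ℕ) < n - 1 := by
    intro i j hij
    by_contra hc
    push_neg at hc
    apply hij
    have hi := i.isLt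
    have hj := j.isLt
    apply Fin.ext
    omega
  match u, v with
  | Sum.inl i, Sum.inl j =>
    by_contra hne
    have hij : i ≠ j := fun e => hne (congrArg Sum.inl e)
    rcases key i j hij with hi | hj
    · have := h _ (mem i hi)
      rw [dxx, dxx, if_pos rfl, if_neg (fun e => hij e.symm)] at this
      omega
    · have := h _ (mem j hj)
      rw [dxx, dxx, if_pos rfl, if_neg hij] at this
      omega
  | Sum.inl i, Sum.inr j =>
    exfalso
    obtain ⟨k, hki, hkj⟩ := exists_third hn i j
    rcases key k i hki with hk | hi
    · have := h _ (mem k hk)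
      rw [dxx, dxy, if_neg hki.symm] at this
      split at this <;> omega
    · have := h _ (mem i hi)
      rw [dxx, dxy, if_pos rfl] at this
      split at this <;> omega
  | Sum.inr i, Sum.inl j =>
    exfalso
    obtain ⟨k, hki, hkj⟩ := exists_third hn i j
    rcases key k j hkj with hk | hj
    · have := h _ (mem k hk)
      rw [dxy, dxx, if_neg hkj.symm] at this
      split at this <;> omega
    · have := h _ (mem j hj)
      rw [dxy, dxx, if_pos rfl] at this
      split at this <;> omega
  | Sum.inr i, Sum.inr j =>
    by_contra hne
    have hij : i ≠ j := fun e => hne (congrArg Sum.inr e)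
    rcases key i j hij with hi | hj
    · have := h _ (mem i hi)
      rw [dxy, dxy, if_pos rfl, if_neg (fun e => hij e.symm)] at this
      omega
    · have := h _ (mem j hj)
      rw [dxy, dxy, if_pos rfl, if_neg hij] at this
      omega
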